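/- Suppose real numbers b1 < 0 < b4 and b2 < 0 < b3, and let λ14 = b4/(b4−b1), λ23 = b3/(b3−b2). Suppose a14 := λ14 a1 + (1−λ14) a4 < 0 and a23 := λ23 a2 + (1−λ23) a3 > 0, and set λ14,23 = a23/(a23 − a14). Then λ14,23 ∈ (0,1), and the quantities γ1 = λ14,23 λ14, γ2 = (1−λ14,23) λ23, γ3 = (1−λ14,23)(1−λ23), γ4 = λ14,23(1−λ14) are nonnegative, sum to 1, and satisfy γ1 a1 + γ2 a2 + γ3 a3 + γ4 a4 = 0 and γ1 b1 + γ2 b2 + γ3 b3 + γ4 b4 = 0. -/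
import Mathlib


/-- The `φ → 0` limit of the zero-hysteresis sliding solution (Proposition 3.1):
the combined multiplier `λ14,23` lies in `(0,1)` and the resulting proportions
`γᵢ` are nonnegative, sum to one, and give a sliding vector tangent to both
switching surfaces. -/
theorem stmt5 (a1 b1 a2 b2 a3 b3 a4 b4 : ℝ)
    (hb1 : b1 < 0) (hb4 : 0 < b4) (hb2 : b2 < 0) (hb3 : 0 < b3)
    (l14 l23 : ℝ) (hl14 : l14 = b4 / (b4 - b1)) (hl23 : l23 = b3 / (b3 - b2))
    (a14 a23 : ℝ) (ha14def : a14 = l14 * a1 + (1 - l14) * a4)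
    (ha23def : a23 = l23 * a2 + (1 - l23) * a3)
    (ha14 : a14 < 0) (ha23 : 0 < a23)
    (l1423 : ℝ) (hl1423 : l1423 = a23 / (a23 - a14)) :
    l1423 ∈ Set.Ioo (0:ℝ) 1 ∧
    (0 ≤ l1423 * l14 ∧ 0 ≤ (1 - l1423) * l23 ∧
      0 ≤ (1 - l1423) * (1 - l23) ∧ 0 ≤ l1423 * (1 - l14)) ∧
    l1423 * l14 + (1 - l1423) * l23 + (1 - l1423) * (1 - l23) + l1423 * (1 - l14) = 1 ∧
    l1423 * l14 * a1 + (1 - l1423) * l23 * a2 + (1 - l1423) * (1 - l23) * a3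
      + l1423 * (1 - l14) * a4 = 0 ∧
    l1423 * l14 * b1 + (1 - l1423) * l23 * b2 + (1 - l1423) * (1 - l23) * b3
      + l1423 * (1 - l14) * b4 = 0 := by
  have hd14 : (0:ℝ) < b4 - b1 := by linarith
  have hd23 : (0:ℝ) < b3 - b2 := by linarith
  have hdA : (0:ℝ) < a23 - a14 := by linarith
  have h14pos : 0 < l14 := by rw [hl14]; positivity
  have h14lt : l14 < 1 := by
    rw [hl14, div_lt_one hd14]; linarith
  have h23pos : 0 < l23 := by rw [hl23]; positivity
  have h23lt : l23 < 1 := by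
    rw [hl23, div_lt_one hd23]; linarith
  have hpos : 0 < l1423 := by rw [hl1423]; positivity
  have hlt : l1423 < 1 := by
    rw [hl1423, div_lt_one hdA]; linarith
  have hb14 : l14 * b1 + (1 - l14) * b4 = 0 := by
    rw [hl14]; field_simp; ring
  have hb23 : l23 * b2 + (1 - l23) * b3 = 0 := by
    rw [hl23]; field_simp; ring
  have hA : l1423 * a14 + (1 - l1423) * a23 = 0 := by
    rw [hl1423]; field_simp; ring
  refine ⟨⟨hpos, hlt⟩, ⟨?_, ?_, ?_, ?_⟩, by ring, ?_, ?_⟩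
  · positivity
  · have : 0 ≤ 1 - l1423 := by linarith
    positivity
  · have : 0 ≤ 1 - l1423 := by linarith
    have : 0 ≤ 1 - l23 := by linarith
    positivity
  · have : 0 ≤ 1 - l14 := by linarith
    positivity
  · linear_combination hA - l1423 * ha14def - (1 - l1423) * ha23def
  · linear_combination l1423 * hb14 + (1 - l1423) * hb23
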